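/- arXiv:alg-geom/9410010 — 2 statements merged into one kernel-verified Lean document; each statement's English description precedes it below -/
import Mathlib

section
/- Assume k has characteristic p > 0. Let f : 𝔾_a^∞ → 𝔾_a^∞ be the morphism of (abelian group)-valued k-functors given at every commutative k-algebra B by (x_1, x_2, x_3, …) ↦ (x_1, x_2 − x_1^p, x_3 − x_2^p, …). Then f is a monomorphism (injective at every B), and the cokernel of f is NOT an additive k-functor. -/
universe u

open TensorProduct

/-- An (abelian group)-valued `k`-functor: a functor from commutative `k`-algebras
(in universe `u`) to abelian groups. -/
structure AbFunctor (k : Type u) [Field k] : Type (u + 1) where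
  obj : ∀ (B : Type u) [CommRing B] [Algebra k B], Type u
  [grp : ∀ (B : Type u) [CommRing B] [Algebra k B], AddCommGroup (obj B)]
  map : ∀ {B C : Type u} [CommRing B] [Algebra k B] [CommRing C] [Algebra k C],
    (B →ₐ[k] C) → (obj B →+ obj C)
  map_id : ∀ (B : Type u) [CommRing B] [Algebra k B],
    map (AlgHom.id k B) = AddMonoidHom.id (obj B)
  map_comp : ∀ {B C D : Type u} [CommRing B] [Algebra k B] [CommRing C] [Algebra k C]
    [CommRing D] [Algebra k D] (f : B →ₐ[k] C) (g : C →ₐ[k] D),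
    map (g.comp f) = (map g).comp (map f)

attribute [instance] AbFunctor.grp

variable (k : Type u) [Field k]

/-- A morphism of (abelian group)-valued `k`-functors. -/
structure AbHom (F G : AbFunctor k) where
  app : ∀ (B : Type u) [CommRing B] [Algebra k B], F.obj B →+ G.obj B
  naturality : ∀ {B C : Type u} [CommRing B] [Algebra k B] [CommRing C] [Algebra k C]
    (f : B →ₐ[k] C) (x : F.obj B), G.map f (app B x) = app C (F.map f x)

/-- A natural transformation of the underlying set-valued functors
(not required to be additive). -/
structure SetHom (F G : AbFunctor k) where
  app : ∀ (B : Type u) [CommRing B] [Algebra k B], F.obj B → G.obj B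
  naturality : ∀ {B C : Type u} [CommRing B] [Algebra k B] [CommRing C] [Algebra k C]
    (f : B →ₐ[k] C) (x : F.obj B), G.map f (app B x) = app C (F.map f x)

/-- An isomorphism of (abelian group)-valued `k`-functors. -/
structure AbIso (F G : AbFunctor k) where
  hom : AbHom k F G
  inv : AbHom k G F
  hom_inv : ∀ (B : Type u) [CommRing B] [Algebra k B] (x : F.obj B),
    inv.app B (hom.app B x) = x
  inv_hom : ∀ (B : Type u) [CommRing B] [Algebra k B] (x : G.obj B),
    hom.app B (inv.app B x) = x
/-- `𝔾_a^ι`, the direct sum of `ι` copies of the additive group functor,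
`B ↦ ⊕_{i : ι} (B, +)`. -/
noncomputable def Ga (ι : Type u) : AbFunctor k where
  obj B _ _ := ι →₀ B
  grp B _ _ := inferInstance
  map f := Finsupp.mapRange.addMonoidHom f.toRingHom.toAddMonoidHom
  map_id B _ _ := by
    ext x i
    simp [Finsupp.mapRange.addMonoidHom]
  map_comp f g := by
    ext x i a
    simp only [AddMonoidHom.comp_apply, Finsupp.singleAddHom_apply,
      Finsupp.mapRange.addMonoidHom_apply, Finsupp.mapRange_single] <;> rfl
/-- The cokernel of a morphism of (abelian group)-valued `k`-functors,
computed objectwise. -/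
noncomputable def AbHom.coker {F G : AbFunctor k} (f : AbHom k F G) : AbFunctor k where
  obj B _ _ := G.obj B ⧸ (f.app B).range
  grp B _ _ := inferInstance
  map {B C} _ _ _ _ g :=
    QuotientAddGroup.map _ _ (G.map g) (by
      rintro y ⟨x, rfl⟩
      exact ⟨F.map g x, (f.naturality g x).symm⟩)
  map_id B _ _ := by
    apply AddMonoidHom.ext
    intro y
    refine QuotientAddGroup.induction_on y ?_
    intro x
    simp [QuotientAddGroup.map_mk, G.map_id]
  map_comp {B C D} _ _ _ _ _ _ g h := by
    apply AddMonoidHom.ext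
    intro y
    refine QuotientAddGroup.induction_on y ?_
    intro x
    simp [QuotientAddGroup.map_mk, G.map_comp]
/-- A functor is strictly additive if it is isomorphic to `𝔾_a^α` for some
`α ∈ {0, 1, …, ∞}`. -/
def IsStrictlyAdditive (F : AbFunctor k) : Prop :=
  (∃ n : ℕ, Nonempty (AbIso k F (Ga k (ULift.{u} (Fin n))))) ∨
    Nonempty (AbIso k F (Ga k (ULift.{u} ℕ)))
/-- `0 → F' → F → F'' → 0` is a short exact sequence of (abelian group)-valued
`k`-functors (exactness is objectwise). -/
structure IsShortExact {F' F F'' : AbFunctor k} (i : AbHom k F' F)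
    (p : AbHom k F F'') : Prop where
  inj : ∀ (B : Type u) [CommRing B] [Algebra k B], Function.Injective (i.app B)
  surj : ∀ (B : Type u) [CommRing B] [Algebra k B], Function.Surjective (p.app B)
  exact : ∀ (B : Type u) [CommRing B] [Algebra k B] (x : F.obj B),
    p.app B x = 0 ↔ x ∈ Set.range (i.app B)
/-- A functor is additive if it admits a finite filtration with strictly additive
successive quotients; equivalently (and as formalized here), the class of additive
functors is the smallest class containing the strictly additive functors and closed
under extensions with strictly additive quotients. -/
inductive IsAdditive : AbFunctor k → Prop
  | of_strict (F : AbFunctor k) : IsStrictlyAdditive k F → IsAdditive F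
  | of_ext {F' F F'' : AbFunctor k} (i : AbHom k F' F) (p : AbHom k F F'') :
      IsShortExact k i p → IsAdditive F' → IsStrictlyAdditive k F'' → IsAdditive F


/-! ### Auxiliary definitions and lemmas -/

/-- The functor `B ↦ B` (a copy of `𝔾_a`). -/
noncomputable def Ga1 : AbFunctor k where
  obj B _ _ := B
  grp B _ _ := inferInstance
  map f := f.toRingHom.toAddMonoidHom
  map_id B _ _ := rfl
  map_comp f g := rfl

/-- Composition of morphisms of abelian-group valued functors. -/
noncomputable def AbHom.compose {F G H : AbFunctor k} (g : AbHom k G H) (f : AbHom k F G) :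
    AbHom k F H where
  app B _ _ := (g.app B).comp (f.app B)
  naturality h x := by
    simp only [AddMonoidHom.comp_apply, g.naturality, f.naturality]

/-- Projection of `𝔾_a^ι` onto the `i`-th coordinate. -/
noncomputable def GaProj (ι : Type u) (i : ι) : AbHom k (Ga k ι) (Ga1 k) where
  app B _ _ := Finsupp.applyAddHom i
  naturality f x := rfl

lemma Ga_map_single {ι : Type u} {B C : Type u} [CommRing B] [Algebra k B] [CommRing C]
    [Algebra k C] (e : B →ₐ[k] C) (i : ι) (b : B) :
    (Ga k ι).map e (Finsupp.single i b) = Finsupp.single i (e b) := by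
  show Finsupp.mapRange.addMonoidHom _ _ = _
  simp [Finsupp.mapRange.addMonoidHom]

/-- The canonical projection onto the cokernel. -/
noncomputable def cokerProj {F G : AbFunctor k} (f : AbHom k F G) :
    AbHom k G (AbHom.coker k f) where
  app B _ _ := QuotientAddGroup.mk' _
  naturality g x := rfl

lemma exists_hom_of_iso {F : AbFunctor k} {ι : Type u} (e : AbIso k F (Ga k ι))
    (B0 : Type u) [CommRing B0] [Algebra k B0] (x0 : F.obj B0) (hx0 : x0 ≠ 0) :
    ∃ (g : AbHom k F (Ga1 k)) (B : Type u) (_ : CommRing B) (_ : Algebra k B)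
      (x : F.obj B), g.app B x ≠ 0 := by
  have hy : e.hom.app B0 x0 ≠ 0 := by
    intro h
    apply hx0
    have h2 := e.hom_inv B0 x0
    rw [h, map_zero] at h2
    exact h2.symm
  obtain ⟨i, hi⟩ : ∃ i, (show ι →₀ B0 from e.hom.app B0 x0) i ≠ 0 := by
    by_contra h
    push_neg at h
    exact hy (Finsupp.ext h)
  exact ⟨AbHom.compose k (GaProj k ι i) e.hom, B0, ‹_›, ‹_›, x0, hi⟩

/-- Any nonzero additive functor admits a morphism to `𝔾_a` which is nonzero somewhere. -/
lemma IsAdditive.exists_hom {k : Type u} [Field k] {F : AbFunctor k} (hF : IsAdditive k F) :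
    ∀ (B0 : Type u) [CommRing B0] [Algebra k B0] (x0 : F.obj B0), x0 ≠ 0 →
    ∃ (g : AbHom k F (Ga1 k)) (B : Type u) (_ : CommRing B) (_ : Algebra k B)
      (x : F.obj B), g.app B x ≠ 0 := by
  induction hF with
  | of_strict F hs =>
    intro B0 _ _ x0 hx0
    rcases hs with ⟨n, he⟩ | he
    · obtain ⟨e⟩ := he
      exact exists_hom_of_iso k e B0 x0 hx0
    · obtain ⟨e⟩ := he
      exact exists_hom_of_iso k e B0 x0 hx0
  | of_ext i p hse hF' hF'' IH =>
    intro B0 _ _ x0 hx0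
    by_cases hdeg : ∀ (B : Type u) [CommRing B] [Algebra k B] (x : _), p.app B x = 0
    · -- the quotient is zero, so `i` is an isomorphism; transport along it
      have hbij : ∀ (B : Type u) [CommRing B] [Algebra k B], Function.Bijective (i.app B) := by
        intro B _ _
        exact ⟨hse.inj B, fun x => (hse.exact B x).mp (hdeg B x)⟩
      obtain ⟨y0, hy0⟩ := (hse.exact B0 x0).mp (hdeg B0 x0)
      have hy0ne : y0 ≠ 0 := by
        intro h
        apply hx0
        rw [← hy0, h, map_zero]
      obtain ⟨g', B, i1, i2, x', hx'⟩ := IH B0 y0 hy0ne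
      letI := i1; letI := i2
      let E : ∀ (B : Type u) [CommRing B] [Algebra k B], _ ≃+ _ := fun B _ _ =>
        AddEquiv.ofBijective (i.app B) (hbij B)
      refine ⟨⟨fun B _ _ => (g'.app B).comp (E B).symm.toAddMonoidHom, ?_⟩,
        B, i1, i2, i.app B x', ?_⟩
      · intro B C _ _ _ _ h x
        simp only [AddMonoidHom.comp_apply, AddEquiv.coe_toAddMonoidHom]
        rw [g'.naturality]
        congr 1
        apply (hbij C).injective
        have e1 : i.app B ((E B).symm x) = x := (E B).apply_symm_apply x
        have e2 : ∀ z, i.app C ((E C).symm z) = z := fun z => (E C).apply_symm_apply z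
        rw [← i.naturality, e1, e2]
      · show g'.app B ((E B).symm (i.app B x')) ≠ 0
        have hxx : (E B).symm (i.app B x') = x' := (E B).symm_apply_apply x'
        rw [hxx]
        exact hx'
    · simp only [not_forall] at hdeg
      obtain ⟨B, i1, i2, x, hx⟩ := hdeg
      letI := i1; letI := i2
      obtain ⟨ι, ⟨e⟩⟩ : ∃ ι : Type u, Nonempty (AbIso k _ (Ga k ι)) := by
        rcases hF'' with ⟨n, he⟩ | he
        · exact ⟨_, he⟩
        · exact ⟨_, he⟩
      have hy : e.hom.app B (p.app B x) ≠ 0 := by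
        intro h
        apply hx
        have h2 := e.hom_inv B (p.app B x)
        rw [h, map_zero] at h2
        exact h2.symm
      obtain ⟨j, hj⟩ : ∃ j, (show ι →₀ B from e.hom.app B (p.app B x)) j ≠ 0 := by
        by_contra h
        push_neg at h
        exact hy (Finsupp.ext h)
      exact ⟨AbHom.compose k (AbHom.compose k (GaProj k ι j) e.hom) p, B, i1, i2, x, hj⟩

open Polynomial in
/-- Any morphism `𝔾_a^∞ → 𝔾_a` vanishing on the image of `f` vanishes. -/
lemma psi_eq_zero {k : Type u} [Field k] (p : ℕ) [CharP k p] (hp : 0 < p)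
    (f : AbHom k (Ga k (ULift.{u} ℕ)) (Ga k (ULift.{u} ℕ)))
    (hf : ∀ (B : Type u) [CommRing B] [Algebra k B] (x : ULift.{u} ℕ →₀ B),
      (show ULift.{u} ℕ →₀ B from f.app B x) (ULift.up 0) = x (ULift.up 0) ∧
      ∀ n : ℕ, (show ULift.{u} ℕ →₀ B from f.app B x) (ULift.up (n + 1)) =
        x (ULift.up (n + 1)) - (x (ULift.up n)) ^ p)
    (ψ : AbHom k (Ga k (ULift.{u} ℕ)) (Ga1 k))
    (hψ : ∀ (B : Type u) [CommRing B] [Algebra k B] (x : ULift.{u} ℕ →₀ B),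
      ψ.app B (f.app B x) = 0)
    (B : Type u) [CommRing B] [Algebra k B] (x : ULift.{u} ℕ →₀ B) :
    ψ.app B x = 0 := by
  have hp2 : 2 ≤ p := ((CharP.char_is_prime_or_zero k p).resolve_right hp.ne').two_le
  set Q : ℕ → Polynomial k := fun n =>
    ψ.app (Polynomial k) (Finsupp.single (ULift.up n) Polynomial.X) with hQdef
  -- f on single generators
  have hfs : ∀ (C : Type u) [CommRing C] [Algebra k C] (n : ℕ) (b : C),
      (f.app C (Finsupp.single (ULift.up n) b) : ULift.{u} ℕ →₀ C) =
        Finsupp.single (ULift.up n) b - Finsupp.single (ULift.up (n + 1)) (b ^ p) := by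
    intro C _ _ n b
    obtain ⟨h0, hs⟩ := hf C (Finsupp.single (ULift.up n) b)
    apply Finsupp.ext
    rintro ⟨m⟩
    cases m with
    | zero =>
      rw [h0, Finsupp.sub_apply]
      simp [Finsupp.single_apply]
    | succ m =>
      rw [hs m, Finsupp.sub_apply]
      simp only [Finsupp.single_apply]
      by_cases h1 : n = m + 1 <;> by_cases h2 : n = m <;>
        first
          | (simp [h1, h2, zero_pow hp.ne']; try omega)
          | omega
  -- the key recursion Q n = (Q (n+1)).comp (X ^ p)
  have hrec : ∀ n, Q n = (Q (n + 1)).comp (X ^ p) := by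
    intro n
    have h2 := hψ (Polynomial k) (Finsupp.single (ULift.up n) X)
    rw [hfs _ n X] at h2
    erw [map_sub, sub_eq_zero] at h2
    have h4 := ψ.naturality (Polynomial.aeval (X ^ p : Polynomial k))
      (Finsupp.single (ULift.up (n + 1)) X)
    rw [Ga_map_single, Polynomial.aeval_X] at h4
    rw [hQdef]
    show ψ.app _ (Finsupp.single (ULift.up n) X) = _
    rw [h2, ← h4]
    show Polynomial.aeval (X ^ p : Polynomial k) (Q (n + 1)) = _
    erw [Polynomial.comp_eq_aeval]
  -- constant terms vanish
  have hconst : ∀ n, (Q n).eval 0 = 0 := by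
    intro n
    have h4 := ψ.naturality (Polynomial.aeval (0 : k)) (Finsupp.single (ULift.up n) X)
    rw [Ga_map_single, Polynomial.aeval_X, Finsupp.single_zero] at h4
    erw [map_zero] at h4
    have h5 : Polynomial.aeval (0 : k) (Q n) = 0 := h4
    rwa [show (Polynomial.aeval (0 : k)) (Q n) = (Q n).eval 0 from
      congrFun (Polynomial.coe_aeval_eq_eval 0) (Q n)] at h5
  -- all Q n vanish
  have hQ : ∀ n, Q n = 0 := by
    by_contra h
    push_neg at h
    obtain ⟨n, hn⟩ := h
    have hall : ∀ m, Q (n + m) ≠ 0 := by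
      intro m
      induction m with
      | zero => exact hn
      | succ m ih =>
        intro h0
        apply ih
        rw [hrec (n + m), show n + (m + 1) = (n + m) + 1 from by omega] at *
        rw [h0, Polynomial.zero_comp]
    have hge1 : ∀ m, 1 ≤ (Q (n + m)).natDegree := by
      intro m
      rw [Nat.one_le_iff_ne_zero]
      intro h1
      have ha := Polynomial.eq_C_of_natDegree_eq_zero h1
      apply hall m
      rw [ha, Polynomial.coeff_zero_eq_eval_zero, hconst, map_zero]
    have hdeg : ∀ m, (Q n).natDegree = (Q (n + m)).natDegree * p ^ m := by
      intro m
      induction m with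
      | zero => simp
      | succ m ih =>
        rw [ih, hrec (n + m), Polynomial.natDegree_comp, Polynomial.natDegree_X_pow,
          show n + m + 1 = n + (m + 1) from by omega, pow_succ, mul_assoc]
        ring
    set d := (Q n).natDegree with hd
    have h1 : d < 2 ^ d := Nat.lt_two_pow_self
    have h2 : (2 : ℕ) ^ d ≤ p ^ d := Nat.pow_le_pow_left hp2 d
    have h3 : p ^ d ≤ (Q (n + d)).natDegree * p ^ d :=
      Nat.le_mul_of_pos_left _ (hge1 d)
    have h4 := hdeg d
    omega
  -- hence ψ vanishes on all singles
  have hsingle : ∀ (C : Type u) [CommRing C] [Algebra k C] (i : ULift.{u} ℕ) (b : C),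
      ψ.app C (Finsupp.single i b) = 0 := by
    intro C _ _ i b
    obtain ⟨m⟩ := i
    have h4 := ψ.naturality (Polynomial.aeval (b : C)) (Finsupp.single (ULift.up m) X)
    rw [Ga_map_single, Polynomial.aeval_X] at h4
    rw [← h4]
    show Polynomial.aeval b (Q m) = 0
    rw [hQ m, map_zero]
  refine Finsupp.induction x (map_zero _) ?_
  intro a b g ha hb ih
  erw [map_add, hsingle B a b, ih, add_zero]
/-- Faltings' example: in characteristic `p > 0`, the morphism
`𝔾_a^∞ → 𝔾_a^∞`, `(x₁, x₂, x₃, …) ↦ (x₁, x₂ - x₁^p, x₃ - x₂^p, …)` is a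
monomorphism whose cokernel is not additive. -/
theorem faltings_example {k : Type u} [Field k] (p : ℕ) [CharP k p] (hp : 0 < p)
    (f : AbHom k (Ga k (ULift.{u} ℕ)) (Ga k (ULift.{u} ℕ)))
    (hf : ∀ (B : Type u) [CommRing B] [Algebra k B] (x : ULift.{u} ℕ →₀ B),
      (show ULift.{u} ℕ →₀ B from f.app B x) (ULift.up 0) = x (ULift.up 0) ∧
      ∀ n : ℕ, (show ULift.{u} ℕ →₀ B from f.app B x) (ULift.up (n + 1)) =
        x (ULift.up (n + 1)) - (x (ULift.up n)) ^ p) :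
    (∀ (B : Type u) [CommRing B] [Algebra k B], Function.Injective (f.app B)) ∧
      ¬ IsAdditive k (AbHom.coker k f) := by
  constructor
  · intro B _ _
    rw [injective_iff_map_eq_zero]
    intro x hx
    have key : ∀ n : ℕ, (show ULift.{u} ℕ →₀ B from x) (ULift.up n) = 0 := by
      intro n
      induction n with
      | zero =>
        rw [← (hf B x).1, hx]
        rfl
      | succ n ih =>
        have hs := (hf B x).2 n
        rw [ih, zero_pow hp.ne', sub_zero] at hs
        rw [← hs, hx]
        rfl
    refine Finsupp.ext ?_
    rintro ⟨n⟩
    exact (key n).trans rfl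
  · intro hadd
    -- the class of `single 0 X` in the cokernel at `k[X]` is nonzero
    have hx0 : (cokerProj k f).app (Polynomial k)
        (Finsupp.single (ULift.up 0) Polynomial.X) ≠ 0 := by
      intro h
      have hmem : Finsupp.single (ULift.up 0) (Polynomial.X : Polynomial k) ∈
          (f.app (Polynomial k)).range :=
            (@QuotientAddGroup.eq_zero_iff _ _ _ (@AddSubgroup.normal_of_isAddCommutative _ _ ⟨⟨fun a b => add_comm a b⟩⟩ _) _).mp h
      obtain ⟨x, hx⟩ := hmem
      have hpow : ∀ n : ℕ, (show ULift.{u} ℕ →₀ Polynomial k from x) (ULift.up n) =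
          Polynomial.X ^ p ^ n := by
        intro n
        induction n with
        | zero =>
          have h0 := (hf (Polynomial k) x).1
          rw [hx] at h0
          rw [← h0]
          simp [Finsupp.single_apply]
        | succ n ih =>
          have hs := (hf (Polynomial k) x).2 n
          rw [hx] at hs
          have hz : (Finsupp.single (ULift.up 0) (Polynomial.X : Polynomial k))
              (ULift.up (n + 1)) = 0 := by
            simp [Finsupp.single_apply]
          rw [hz] at hs
          have hxx : (show ULift.{u} ℕ →₀ Polynomial k from x) (ULift.up (n + 1)) =
              ((show ULift.{u} ℕ →₀ Polynomial k from x) (ULift.up n)) ^ p :=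
            sub_eq_zero.mp hs.symm
          rw [hxx, ih, ← pow_mul, ← pow_succ]
      obtain ⟨i, hi⟩ := Infinite.exists_notMem_finset
        (show ULift.{u} ℕ →₀ Polynomial k from x).support
      have hzero : (show ULift.{u} ℕ →₀ Polynomial k from x) i = 0 :=
        Finsupp.notMem_support_iff.mp hi
      have := hpow i.down
      rw [show ULift.up i.down = i from rfl, hzero] at this
      exact pow_ne_zero _ Polynomial.X_ne_zero this.symm
    obtain ⟨g, B, i1, i2, x, hgx⟩ :=
      hadd.exists_hom (Polynomial k) ((cokerProj k f).app (Polynomial k)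
        (Finsupp.single (ULift.up 0) Polynomial.X)) hx0
    letI := i1; letI := i2
    set ψ := AbHom.compose k g (cokerProj k f) with hψdef
    have hψf : ∀ (B' : Type u) [CommRing B'] [Algebra k B'] (y : ULift.{u} ℕ →₀ B'),
        ψ.app B' (f.app B' y) = 0 := by
      intro B' _ _ y
      show g.app B' ((cokerProj k f).app B' (f.app B' y)) = 0
      have hz : (cokerProj k f).app B' (f.app B' y) = 0 :=
        (QuotientAddGroup.eq_zero_iff _).mpr (AddMonoidHom.mem_range.mpr ⟨y, rfl⟩)
      rw [hz, map_zero]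
    obtain ⟨y, hy⟩ := QuotientAddGroup.mk'_surjective _ x
    apply hgx
    have hψy := psi_eq_zero p hp f hf ψ hψf B y
    have : ψ.app B y = g.app B x := by
      rw [hψdef]
      show g.app B ((cokerProj k f).app B y) = g.app B x
      rw [show (cokerProj k f).app B y = x from hy]
    rw [← this, hψy]
end

section
/- Let I be a subnilpotent (abelian group)-valued k-functor and D a discrete (abelian group)-valued k-functor. Then Ext^1(I, D) = 0: every exact sequence 0 → D → L →^π I → 0 of (abelian group)-valued k-functors splits by a morphism σ : I → L of (abelian group)-valued k-functors with π ∘ σ = id. -/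
universe u

open TensorProduct

variable (k : Type u) [Field k]

/-- The constant sheaf associated to an abelian group `M`:
`B ↦` locally constant functions `Spec B → M`. -/
noncomputable def ConstFunctor (M : Type u) [AddCommGroup M] : AbFunctor k where
  obj B _ _ := LocallyConstant (PrimeSpectrum B) M
  grp B _ _ := inferInstance
  map {B C} _ _ _ _ f :=
    { toFun := LocallyConstant.comap ⟨PrimeSpectrum.comap f.toRingHom, PrimeSpectrum.continuous_comap _⟩
      map_zero' := by ext x; simp
      map_add' := by intro g h; ext x; simp }
  map_id B _ _ := by
    ext g x
    simp
  map_comp f g := by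
    ext h x
    rfl
section TensorIncl

variable {B C : Type u} [CommRing B] [Algebra k B] [CommRing C] [Algebra k C]
  [Algebra B C] [IsScalarTower k B C]

/-- `c ↦ c ⊗ 1 : C → C ⊗_B C`, as a `k`-algebra homomorphism. -/
noncomputable def tensorIncl₁ : C →ₐ[k] C ⊗[B] C :=
  Algebra.TensorProduct.includeLeft

/-- `c ↦ 1 ⊗ c : C → C ⊗_B C`, as a `k`-algebra homomorphism. -/
noncomputable def tensorIncl₂ : C →ₐ[k] C ⊗[B] C :=
  (Algebra.TensorProduct.includeRight (R := B) (A := C) (B := C)).restrictScalars k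

end TensorIncl

/-- A functor is a sheaf for the fpqc topology if for every faithfully flat
homomorphism `B → C` of commutative `k`-algebras, `F(B)` is exactly the equalizer of
the two maps `F(C) ⇉ F(C ⊗_B C)` induced by `c ↦ c ⊗ 1` and `c ↦ 1 ⊗ c`. -/
def IsFpqcSheaf (F : AbFunctor k) : Prop :=
  ∀ (B C : Type u) [CommRing B] [Algebra k B] [CommRing C] [Algebra k C]
    [Algebra B C] [IsScalarTower k B C], Module.FaithfullyFlat B C →
    Function.Injective (F.map (IsScalarTower.toAlgHom k B C)) ∧
    Set.range (F.map (IsScalarTower.toAlgHom k B C)) =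
      { x : F.obj C |
        F.map (tensorIncl₁ k (B := B) (C := C)) x
          = F.map (tensorIncl₂ k (B := B) (C := C)) x }
/-- A functor is nilpotent if it is an fpqc sheaf which vanishes on all reduced
`k`-algebras. -/
def IsNilpotentFunctor (F : AbFunctor k) : Prop :=
  IsFpqcSheaf k F ∧
    ∀ (B : Type u) [CommRing B] [Algebra k B], IsReduced B → ∀ x : F.obj B, x = 0

/-- A functor is subnilpotent if it embeds as a subfunctor of a nilpotent functor. -/
def IsSubnilpotent (F : AbFunctor k) : Prop :=
  ∃ (N : AbFunctor k) (j : AbHom k F N), IsNilpotentFunctor k N ∧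
    ∀ (B : Type u) [CommRing B] [Algebra k B], Function.Injective (j.app B)
/-- A functor is discrete if it is isomorphic to the constant sheaf associated to
some abelian group. -/
def IsDiscreteFunctor (F : AbFunctor k) : Prop :=
  ∃ M : AddCommGrpCat.{u}, Nonempty (AbIso k F (ConstFunctor k M))


section ExtAux

private lemma isReduced_quot (B : Type u) [CommRing B] : IsReduced (B ⧸ nilradical B) := by
  constructor
  intro x hx
  obtain ⟨b, rfl⟩ := Ideal.Quotient.mk_surjective x
  obtain ⟨n, hn⟩ := hx
  rw [← map_pow, Ideal.Quotient.eq_zero_iff_mem] at hn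
  obtain ⟨m, hm⟩ := hn
  rw [Ideal.Quotient.eq_zero_iff_mem]
  exact ⟨n * m, by rw [pow_mul]; exact hm⟩

private lemma comap_mk_bijective (B : Type u) [CommRing B] :
    Function.Bijective (PrimeSpectrum.comap (Ideal.Quotient.mk (nilradical B))) := by
  constructor
  · exact PrimeSpectrum.comap_injective_of_surjective _ Ideal.Quotient.mk_surjective
  · intro p
    have h := range_comap_of_surjective _ (Ideal.Quotient.mk (nilradical B))
      Ideal.Quotient.mk_surjective
    have hp : p ∈ Set.range (PrimeSpectrum.comap (Ideal.Quotient.mk (nilradical B))) := by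
      rw [h, PrimeSpectrum.mem_zeroLocus, Ideal.mk_ker]
      exact nilradical_le_prime _
    exact hp

private noncomputable def specQuotHomeo (B : Type u) [CommRing B] :
    PrimeSpectrum (B ⧸ nilradical B) ≃ₜ PrimeSpectrum B :=
  (Equiv.ofBijective _ (comap_mk_bijective B)).toHomeomorphOfIsInducing
    (PrimeSpectrum.isClosedEmbedding_comap_of_surjective _ _
      Ideal.Quotient.mk_surjective).isInducing

private lemma constMap_bijective (k : Type u) [Field k] (M : Type u) [AddCommGroup M]
    (B : Type u) [CommRing B] [Algebra k B] :
    Function.Bijective ((ConstFunctor k M).map (Ideal.Quotient.mkₐ k (nilradical B))) := by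
  show Function.Bijective
    (LocallyConstant.comap (Z := M) ⟨PrimeSpectrum.comap (Ideal.Quotient.mk (nilradical B)),
      PrimeSpectrum.continuous_comap _⟩)
  constructor
  · exact LocallyConstant.comap_injective _ (comap_mk_bijective B).2
  · intro g
    refine ⟨LocallyConstant.comap ((specQuotHomeo B).symm : C(_, _)) g, ?_⟩
    ext x
    rw [LocallyConstant.coe_comap_apply, LocallyConstant.coe_comap_apply]
    exact congrArg g ((specQuotHomeo B).symm_apply_apply x)

private noncomputable def redMap {k : Type u} [Field k] {B C : Type u} [CommRing B] [Algebra k B]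
    [CommRing C] [Algebra k C] (f : B →ₐ[k] C) :
    (B ⧸ nilradical B) →ₐ[k] (C ⧸ nilradical C) :=
  Ideal.quotientMapₐ _ f (fun b hb =>
    Ideal.mem_comap.mpr (mem_nilradical.mpr ((mem_nilradical.mp hb).map f)))

private lemma redMap_comp {k : Type u} [Field k] {B C : Type u} [CommRing B] [Algebra k B]
    [CommRing C] [Algebra k C] (f : B →ₐ[k] C) :
    (Ideal.Quotient.mkₐ k (nilradical C)).comp f =
      (redMap f).comp (Ideal.Quotient.mkₐ k (nilradical B)) := by
  ext b
  rfl

variable {k : Type u} [Field k] {I D L : AbFunctor k}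
  (j : AbHom k D L) (pi : AbHom k L I) (hex : IsShortExact k j pi)
  (hIzero : ∀ (B : Type u) [CommRing B] [Algebra k B] (x : I.obj (B ⧸ nilradical B)), x = 0)
  (hDbij : ∀ (B : Type u) [CommRing B] [Algebra k B],
    Function.Bijective (D.map (Ideal.Quotient.mkₐ k (nilradical B))))

private noncomputable def ddFun (B : Type u) [CommRing B] [Algebra k B] (y : L.obj B) :
    D.obj (B ⧸ nilradical B) :=
  (Set.mem_range.mp ((hex.exact _ (L.map (Ideal.Quotient.mkₐ k (nilradical B)) y)).mp
    (hIzero _ _))).choose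

private lemma j_ddFun (B : Type u) [CommRing B] [Algebra k B] (y : L.obj B) :
    j.app _ (ddFun j pi hex hIzero B y)
      = L.map (Ideal.Quotient.mkₐ k (nilradical B)) y := by
  unfold ddFun
  exact (Set.mem_range.mp ((hex.exact _ _).mp (hIzero _ _))).choose_spec

private lemma ddFun_add (B : Type u) [CommRing B] [Algebra k B] (y₁ y₂ : L.obj B) :
    ddFun j pi hex hIzero B (y₁ + y₂)
      = ddFun j pi hex hIzero B y₁ + ddFun j pi hex hIzero B y₂ := by
  apply hex.inj
  rw [map_add, j_ddFun, j_ddFun, j_ddFun, map_add]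

private noncomputable def einvFun (B : Type u) [CommRing B] [Algebra k B] :
    D.obj (B ⧸ nilradical B) ≃+ D.obj B :=
  (AddEquiv.ofBijective (D.map (Ideal.Quotient.mkₐ k (nilradical B))) (hDbij B)).symm

private lemma map_einvFun (B : Type u) [CommRing B] [Algebra k B]
    (d : D.obj (B ⧸ nilradical B)) :
    D.map (Ideal.Quotient.mkₐ k (nilradical B)) (einvFun hDbij B d) = d :=
  (AddEquiv.ofBijective (D.map (Ideal.Quotient.mkₐ k (nilradical B)))
    (hDbij B)).apply_symm_apply d

private lemma einvFun_map (B : Type u) [CommRing B] [Algebra k B] (d : D.obj B) :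
    einvFun hDbij B (D.map (Ideal.Quotient.mkₐ k (nilradical B)) d) = d :=
  (AddEquiv.ofBijective (D.map (Ideal.Quotient.mkₐ k (nilradical B)))
    (hDbij B)).symm_apply_apply d

private noncomputable def tauFun (B : Type u) [CommRing B] [Algebra k B] (y : L.obj B) :
    L.obj B :=
  y - j.app B (einvFun hDbij B (ddFun j pi hex hIzero B y))

private lemma tauFun_add (B : Type u) [CommRing B] [Algebra k B] (y₁ y₂ : L.obj B) :
    tauFun j pi hex hIzero hDbij B (y₁ + y₂)
      = tauFun j pi hex hIzero hDbij B y₁ + tauFun j pi hex hIzero hDbij B y₂ := by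
  unfold tauFun
  rw [ddFun_add, map_add, map_add]
  abel

private lemma tauFun_j (B : Type u) [CommRing B] [Algebra k B] (d : D.obj B) :
    tauFun j pi hex hIzero hDbij B (j.app B d) = 0 := by
  have h1 : ddFun j pi hex hIzero B (j.app B d)
      = D.map (Ideal.Quotient.mkₐ k (nilradical B)) d := by
    apply hex.inj
    rw [j_ddFun]
    exact j.naturality _ d
  unfold tauFun
  rw [h1, einvFun_map, sub_self]

private lemma tauFun_pi_eq (B : Type u) [CommRing B] [Algebra k B] (y₁ y₂ : L.obj B)
    (h : pi.app B y₁ = pi.app B y₂) :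
    tauFun j pi hex hIzero hDbij B y₁ = tauFun j pi hex hIzero hDbij B y₂ := by
  have h0 : pi.app B (y₁ - y₂) = 0 := by rw [map_sub, h, sub_self]
  obtain ⟨d, hd⟩ := Set.mem_range.mp ((hex.exact B _).mp h0)
  have hy : (y₁ - y₂) + y₂ = y₁ := sub_add_cancel y₁ y₂
  calc tauFun j pi hex hIzero hDbij B y₁
      = tauFun j pi hex hIzero hDbij B ((y₁ - y₂) + y₂) := by rw [hy]
    _ = tauFun j pi hex hIzero hDbij B (y₁ - y₂)
          + tauFun j pi hex hIzero hDbij B y₂ := tauFun_add _ _ _ _ _ _ _ _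
    _ = tauFun j pi hex hIzero hDbij B y₂ := by
          rw [← hd, tauFun_j, zero_add]

private lemma pi_tauFun (B : Type u) [CommRing B] [Algebra k B] (y : L.obj B) :
    pi.app B (tauFun j pi hex hIzero hDbij B y) = pi.app B y := by
  unfold tauFun
  rw [map_sub]
  have : pi.app B (j.app B (einvFun hDbij B (ddFun j pi hex hIzero B y))) = 0 :=
    (hex.exact B _).mpr ⟨_, rfl⟩
  rw [this, sub_zero]

private lemma tauFun_nat {B C : Type u} [CommRing B] [Algebra k B] [CommRing C] [Algebra k C]
    (f : B →ₐ[k] C) (y : L.obj B) :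
    L.map f (tauFun j pi hex hIzero hDbij B y)
      = tauFun j pi hex hIzero hDbij C (L.map f y) := by
  unfold tauFun
  rw [map_sub]
  congr 1
  rw [j.naturality]
  congr 1
  -- D.map f (einvFun B (ddFun B y)) = einvFun C (ddFun C (L.map f y))
  apply (hDbij C).1
  rw [map_einvFun]
  -- LHS : D.map r_C (D.map f (einvFun B (ddFun B y))) = ddFun C (L.map f y)
  have h1 : D.map (Ideal.Quotient.mkₐ k (nilradical C))
        (D.map f (einvFun hDbij B (ddFun j pi hex hIzero B y)))
      = D.map (redMap f) (ddFun j pi hex hIzero B y) := by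
    rw [← AddMonoidHom.comp_apply, ← D.map_comp, redMap_comp, D.map_comp,
      AddMonoidHom.comp_apply, map_einvFun]
  rw [h1]
  apply hex.inj
  rw [j_ddFun, ← j.naturality, j_ddFun, ← AddMonoidHom.comp_apply, ← L.map_comp, ← redMap_comp,
    L.map_comp, AddMonoidHom.comp_apply]

end ExtAux

/-- `Ext¹(I, D) = 0` for `I` subnilpotent and `D` discrete: every
extension `0 → D → L → I → 0` splits. -/
theorem ext_subnilpotent_discrete_vanishes {k : Type u} [Field k]
    {I D L : AbFunctor k} (hI : IsSubnilpotent k I) (hD : IsDiscreteFunctor k D)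
    (j : AbHom k D L) (pi : AbHom k L I) (hex : IsShortExact k j pi) :
    ∃ σ : AbHom k I L, ∀ (B : Type u) [CommRing B] [Algebra k B] (x : I.obj B),
      pi.app B (σ.app B x) = x := by
  classical
  obtain ⟨N, jN, hN, hjN⟩ := hI
  obtain ⟨M, ⟨e⟩⟩ := hD
  have hIzero : ∀ (B : Type u) [CommRing B] [Algebra k B] (x : I.obj (B ⧸ nilradical B)),
      x = 0 := by
    intro B _ _ x
    apply hjN (B ⧸ nilradical B)
    rw [map_zero]
    exact hN.2 _ (isReduced_quot B) _
  have ehom_bij : ∀ (B : Type u) [CommRing B] [Algebra k B],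
      Function.Bijective (e.hom.app B) :=
    fun B _ _ => ⟨Function.LeftInverse.injective (e.hom_inv B),
      Function.RightInverse.surjective (e.inv_hom B)⟩
  have einv_bij : ∀ (B : Type u) [CommRing B] [Algebra k B],
      Function.Bijective (e.inv.app B) :=
    fun B _ _ => ⟨Function.LeftInverse.injective (e.inv_hom B),
      Function.RightInverse.surjective (e.hom_inv B)⟩
  have hDbij : ∀ (B : Type u) [CommRing B] [Algebra k B],
      Function.Bijective (D.map (Ideal.Quotient.mkₐ k (nilradical B))) := by
    intro B _ _
    have heq : ⇑(D.map (Ideal.Quotient.mkₐ k (nilradical B))) =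
        ⇑(e.inv.app (B ⧸ nilradical B)) ∘
          ⇑((ConstFunctor k M).map (Ideal.Quotient.mkₐ k (nilradical B))) ∘ ⇑(e.hom.app B) := by
      funext x
      simp only [Function.comp_apply]
      rw [e.hom.naturality]
      exact (e.hom_inv (B ⧸ nilradical B) _).symm
    rw [heq]
    exact (einv_bij _).comp ((constMap_bijective k M B).comp (ehom_bij B))
  refine ⟨{ app := fun B _ _ => AddMonoidHom.mk'
              (fun x => tauFun j pi hex hIzero hDbij B (hex.surj B x).choose)
              (fun x₁ x₂ => ?_),
            naturality := ?_ }, ?_⟩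
  · -- additivity
    show tauFun j pi hex hIzero hDbij B (hex.surj B (x₁ + x₂)).choose
        = tauFun j pi hex hIzero hDbij B (hex.surj B x₁).choose
          + tauFun j pi hex hIzero hDbij B (hex.surj B x₂).choose
    have h1 : pi.app B (hex.surj B (x₁ + x₂)).choose
        = pi.app B ((hex.surj B x₁).choose + (hex.surj B x₂).choose) := by
      rw [map_add, (hex.surj B x₁).choose_spec, (hex.surj B x₂).choose_spec,
        (hex.surj B (x₁ + x₂)).choose_spec]
    rw [tauFun_pi_eq j pi hex hIzero hDbij B _ _ h1, tauFun_add]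
  · -- naturality
    intro B C _ _ _ _ f x
    show L.map f (tauFun j pi hex hIzero hDbij B (hex.surj B x).choose)
      = tauFun j pi hex hIzero hDbij C (hex.surj C (I.map f x)).choose
    rw [tauFun_nat]
    apply tauFun_pi_eq
    rw [← pi.naturality, (hex.surj B x).choose_spec, (hex.surj C (I.map f x)).choose_spec]
  · -- splitting
    intro B _ _ x
    show pi.app B (tauFun j pi hex hIzero hDbij B (hex.surj B x).choose) = x
    rw [pi_tauFun, (hex.surj B x).choose_spec]
end
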